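/- Under the bistable Solow–Swan hypotheses, trajectories starting to the left of the unstable equilibrium E₁ reach the origin: if x is a solution with initial condition x₀ ∈ (0, E₁), then x(t) → 0 as t → ∞. -/

import Mathlib

open Set Filter Metric

private lemma lipOn_sub_aux {K : NNReal} {F : ℝ → ℝ} {s : Set ℝ}
    (h : LipschitzOnWith K F s) (C : ℝ) :
    LipschitzOnWith (K + ‖C‖₊) (fun y => F y - C * y) s := by
  rw [lipschitzOnWith_iff_dist_le_mul] at h ⊢
  intro a ha b hb
  have h1 := h a ha b hb
  have h2 : dist (C * a) (C * b) = ‖C‖ * dist a b := by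
    simp [Real.dist_eq, ← mul_sub, abs_mul, Real.norm_eq_abs]
  calc dist (F a - C * a) (F b - C * b)
      ≤ dist (F a) (F b) + dist (C * a) (C * b) := dist_sub_sub_le _ _ _ _
    _ ≤ (K : ℝ) * dist a b + ‖C‖ * dist a b := by rw [h2]; linarith
    _ = ((K + ‖C‖₊ : NNReal) : ℝ) * dist a b := by push_cast; ring

/-- Under the bistable Solow–Swan hypotheses, trajectories starting to the left
of the unstable equilibrium `E₁` reach the origin. -/
theorem solow_swan_bistable_left_to_origin
    (F : ℝ → ℝ) (C E₁ E : ℝ) (hC : 0 < C)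
    (hF : LocallyLipschitz F) (hF0 : F 0 = 0)
    (hE₁ : 0 < E₁) (hE₁E : E₁ < E)
    (hE₁eq : F E₁ = C * E₁) (hEeq : F E = C * E)
    (hlt₁ : ∀ z ∈ Set.Ioo (0 : ℝ) E₁, F z < C * z)
    (hgt : ∀ z ∈ Set.Ioo E₁ E, C * z < F z)
    (hlt : ∀ z : ℝ, E < z → F z < C * z)
    (x : ℝ → ℝ) (x₀ : ℝ) (hx₀ : x₀ ∈ Set.Ioo (0 : ℝ) E₁) (hinit : x 0 = x₀)
    (hode : ∀ t : ℝ, 0 ≤ t → HasDerivAt x (F (x t) - C * x t) t) :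
    Filter.Tendsto x Filter.atTop (nhds 0) := by
  set f : ℝ → ℝ := fun z => F z - C * z with hf_def
  have hxcont : ContinuousOn x (Ici 0) :=
    fun t ht => ((hode t ht).continuousAt).continuousWithinAt
  -- Invariance: the trajectory stays in `Ioo 0 E₁`.
  have hinv : ∀ t, 0 ≤ t → x t ∈ Ioo 0 E₁ := by
    by_contra hcon
    push_neg at hcon
    obtain ⟨t₁, ht₁0, ht₁⟩ := hcon
    set S : Set ℝ := Ici 0 ∩ x ⁻¹' (Ioo 0 E₁)ᶜ with hS
    have hSne : S.Nonempty := ⟨t₁, ht₁0, ht₁⟩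
    have hSbdd : BddBelow S := ⟨0, fun s hs => hs.1⟩
    have hSclosed : IsClosed S :=
      hxcont.preimage_isClosed_of_isClosed isClosed_Ici isOpen_Ioo.isClosed_compl
    set T : ℝ := sInf S with hTdef
    have hTS : T ∈ S := hSclosed.csInf_mem hSne hSbdd
    have hT0' : (0 : ℝ) ≤ T := hTS.1
    -- T is positive
    have hT0 : 0 < T := by
      have hx0mem : x 0 ∈ Ioo 0 E₁ := by rw [hinit]; exact hx₀
      have hnhds : x ⁻¹' (Ioo 0 E₁) ∈ nhds (0 : ℝ) :=
        (hode 0 le_rfl).continuousAt.preimage_mem_nhds (isOpen_Ioo.mem_nhds hx0mem)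
      obtain ⟨δ, hδ, hball⟩ := Metric.mem_nhds_iff.mp hnhds
      have : δ / 2 ≤ T := by
        apply le_csInf hSne
        intro s hs
        by_contra hlt'
        push_neg at hlt'
        have : s ∈ Metric.ball (0 : ℝ) δ := by
          simp only [Metric.mem_ball, Real.dist_eq, sub_zero]
          rw [abs_of_nonneg hs.1]; linarith
        exact hs.2 (hball this)
      linarith
    have hbefore : ∀ s, 0 ≤ s → s < T → x s ∈ Ioo 0 E₁ := by
      intro s hs0 hsT
      by_contra h
      exact absurd (csInf_le hSbdd ⟨hs0, h⟩) (not_le.mpr hsT)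
    -- x T is in Icc 0 E₁
    have hnb : (nhdsWithin T (Iio T)).NeBot := nhdsLT_neBot T
    have htendT : Tendsto x (nhdsWithin T (Iio T)) (nhds (x T)) :=
      ((hode T hT0').continuousAt).continuousWithinAt
    have hev : ∀ᶠ s in nhdsWithin T (Iio T), x s ∈ Icc 0 E₁ := by
      filter_upwards [eventually_nhdsWithin_of_eventually_nhds
        (Filter.Tendsto.eventually_const_lt hT0 tendsto_id), self_mem_nhdsWithin] with s h1 h2
      exact Ioo_subset_Icc_self (hbefore s h1.le h2)
    have hxTmem : x T ∈ Icc 0 E₁ := isClosed_Icc.mem_of_tendsto htendT hev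
    have hxTnot : x T ∉ Ioo 0 E₁ := hTS.2
    set c : ℝ := x T with hc_def
    have hvc : f c = 0 := by
      rcases eq_or_lt_of_le hxTmem.1 with h0 | h0
      · simp only [hf_def, ← h0, hF0]; ring
      · have hE : c = E₁ := le_antisymm hxTmem.2 (by
          by_contra h; push_neg at h; exact hxTnot ⟨h0, h⟩)
        simp [hf_def, hE, hE₁eq]
    -- local Lipschitz near c
    obtain ⟨K, u, hu, hKu⟩ := hF c
    obtain ⟨r, hr, hball⟩ := Metric.mem_nhds_iff.mp hu
    have hlip : LipschitzOnWith (K + ‖C‖₊) f (Metric.ball c r) :=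
      lipOn_sub_aux (hKu.mono hball) C
    -- choose a < T with x([a,T]) ⊆ ball c r
    obtain ⟨δ, hδ, hδball⟩ := Metric.continuousAt_iff.mp (hode T hT0').continuousAt r hr
    set a : ℝ := max (T - δ / 2) 0 with ha_def
    have ha0 : 0 ≤ a := le_max_right _ _
    have haT : a < T := by
      apply max_lt <;> linarith
    have hmem : ∀ s ∈ Icc a T, x s ∈ Metric.ball c r := by
      intro s hs
      apply hδball
      have h1 : T - δ / 2 ≤ a := le_max_left _ _
      simp only [Real.dist_eq]
      rw [abs_of_nonpos (by linarith [hs.2])]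
      linarith [hs.1]
    have huniq : EqOn x (fun _ => c) (Icc a T) := by
      apply ODE_solution_unique_of_mem_Icc_left
        (v := fun _ y => f y) (s := fun _ => Metric.ball c r) (K := K + ‖C‖₊)
        (fun _ _ => hlip)
        (hxcont.mono (fun s hs => le_trans ha0 hs.1))
        (fun t ht => (hode t (le_trans ha0 ht.1.le)).hasDerivWithinAt)
        (fun t ht => hmem t ⟨ht.1.le, ht.2⟩)
        continuousOn_const
        (fun t ht => by
          have : HasDerivWithinAt (fun _ : ℝ => c) 0 (Iic t) t := hasDerivWithinAt_const t _ c
          simpa [hvc] using this)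
        (fun t ht => Metric.mem_ball_self hr)
        rfl
    have hxa : x a = c := huniq ⟨le_refl a, haT.le⟩
    exact hxTnot (hxa ▸ hbefore a ha0 haT)
  -- x is antitone on [0, ∞)
  have hmono : AntitoneOn x (Ici 0) := by
    apply antitoneOn_of_deriv_nonpos (convex_Ici 0) hxcont
    · intro t ht
      rw [interior_Ici] at ht
      exact ((hode t ht.le).differentiableAt).differentiableWithinAt
    · intro t ht
      rw [interior_Ici] at ht
      rw [(hode t ht.le).deriv]
      have := hlt₁ _ (hinv t ht.le)
      linarith
  set g : ℝ → ℝ := fun t => x (max t 0) with hg_def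
  have hganti : Antitone g := fun s t hst =>
    hmono (le_max_right s 0) (le_max_right t 0) (max_le_max hst le_rfl)
  have hgpos : ∀ t, 0 < g t := fun t => (hinv _ (le_max_right t 0)).1
  have hbdd : BddBelow (range g) := ⟨0, fun y ⟨t, ht⟩ => ht ▸ (hgpos t).le⟩
  set L : ℝ := ⨅ t, g t with hL_def
  have htend : Tendsto g atTop (nhds L) := tendsto_atTop_ciInf hganti hbdd
  have heqev : g =ᶠ[atTop] x := by
    filter_upwards [eventually_ge_atTop (0 : ℝ)] with t ht
    simp [hg_def, max_eq_left ht]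
  have hg0 : g 0 = x₀ := by simp [hg_def, hinit]
  have hL0 : 0 ≤ L := le_ciInf fun t => (hgpos t).le
  have hLx₀ : L ≤ x₀ := hg0 ▸ ciInf_le hbdd 0
  have hxge : ∀ t, 0 ≤ t → L ≤ x t := by
    intro t ht
    have := ciInf_le hbdd t
    rwa [show g t = x t from by simp [hg_def, max_eq_left ht]] at this
  have hxle : ∀ t, 0 ≤ t → x t ≤ x₀ := fun t ht =>
    hinit ▸ hmono (self_mem_Ici) ht ht
  -- L = 0
  have hLeq : L = 0 := by
    by_contra hne
    have hLpos : 0 < L := lt_of_le_of_ne hL0 (Ne.symm hne)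
    have fcont : Continuous f := (hF.continuous).sub (continuous_const.mul continuous_id)
    obtain ⟨z₀, hz₀mem, hz₀max⟩ := (isCompact_Icc (a := L) (b := x₀)).exists_isMaxOn
      ⟨L, left_mem_Icc.mpr hLx₀⟩ fcont.continuousOn
    have hz₀neg : f z₀ < 0 := by
      have : z₀ ∈ Ioo 0 E₁ := ⟨lt_of_lt_of_le hLpos hz₀mem.1, lt_of_le_of_lt hz₀mem.2 hx₀.2⟩
      have := hlt₁ _ this
      simp only [hf_def]; linarith
    set δ : ℝ := -f z₀ with hδ_def
    have hδpos : 0 < δ := by simp [hδ_def]; linarith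
    have hanti2 : AntitoneOn (fun t => x t + δ * t) (Ici 0) := by
      apply antitoneOn_of_deriv_nonpos (convex_Ici 0)
      · exact hxcont.add (continuous_const.mul continuous_id).continuousOn
      · intro t ht
        rw [interior_Ici] at ht
        exact (((hode t ht.le).add ((hasDerivAt_id t).const_mul δ)).differentiableAt).differentiableWithinAt
      · intro t ht
        rw [interior_Ici] at ht
        have hd : HasDerivAt (fun t => x t + δ * t) (F (x t) - C * x t + δ * 1) t :=
          (hode t ht.le).add ((hasDerivAt_id t).const_mul δ)
        rw [hd.deriv]
        have hmem : x t ∈ Icc L x₀ := ⟨hxge t ht.le, hxle t ht.le⟩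
        have hfle : F (x t) - C * x t ≤ F z₀ - C * z₀ := hz₀max hmem
        have hδr : δ = -(F z₀ - C * z₀) := rfl
        rw [hδr]
        linarith
    set t₁ : ℝ := (x₀ - L) / δ + 1 with ht₁_def
    have ht₁0 : 0 ≤ t₁ := by
      have : (0:ℝ) ≤ (x₀ - L) / δ := div_nonneg (by linarith) hδpos.le
      rw [ht₁_def]; linarith
    have hle : x t₁ + δ * t₁ ≤ x 0 + δ * 0 := hanti2 self_mem_Ici ht₁0 ht₁0
    rw [hinit, mul_zero, add_zero] at hle
    have hδt : δ * t₁ = (x₀ - L) + δ := by rw [ht₁_def]; field_simp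
    have := hxge t₁ ht₁0
    nlinarith
  exact hLeq ▸ (htend.congr' heqev)
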